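/- Let g(s), s ∈ I, be a C¹ curve of positive definite symmetric n×n matrices satisfying g^{ij}(s) ġ_{ij}(s) = 0 (i.e., det g is constant) and ∫_I (g^{ik}g^{jl} ġ_{ij} ġ_{kl})^{1/2} ds ≤ C < ∞. Then all the metrics g(s) are uniformly equivalent: there exists a constant Λ = Λ(C, g(s₀)) such that Λ⁻¹ g(s₀) ≤ g(s) ≤ Λ g(s₀) as quadratic forms for all s ∈ I. -/

import Mathlib

attribute [local instance] Matrix.normedAddCommGroup Matrix.normedSpace

open Matrix MeasureTheory

lemma lemA {n : ℕ} (M : Matrix (Fin n) (Fin n) ℝ) (w : Fin n → ℝ) :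
    |w ⬝ᵥ M.mulVec w| ≤ Real.sqrt (trace (Mᵀ * M)) * (w ⬝ᵥ w) := by
  have hww : (0:ℝ) ≤ w ⬝ᵥ w := by
    simp only [dotProduct]
    exact Finset.sum_nonneg fun i _ => mul_self_nonneg _
  have htr : trace (Mᵀ * M) = ∑ i, ∑ j, (M j i)^2 := by
    simp [trace, Matrix.mul_apply, Matrix.diag, sq]
  have h1 : (w ⬝ᵥ M.mulVec w)^2 ≤ (w ⬝ᵥ w) * ((M.mulVec w) ⬝ᵥ (M.mulVec w)) := by
    have := Finset.sum_mul_sq_le_sq_mul_sq Finset.univ w (M.mulVec w)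
    simpa [dotProduct, sq] using this
  have h2 : (M.mulVec w) ⬝ᵥ (M.mulVec w) ≤ trace (Mᵀ * M) * (w ⬝ᵥ w) := by
    have hstep : ∀ i : Fin n, (M.mulVec w i)^2 ≤ (∑ j, (M i j)^2) * (w ⬝ᵥ w) := by
      intro i
      have := Finset.sum_mul_sq_le_sq_mul_sq Finset.univ (fun j => M i j) w
      simpa [Matrix.mulVec, dotProduct, sq] using this
    calc (M.mulVec w) ⬝ᵥ (M.mulVec w) = ∑ i, (M.mulVec w i)^2 := by
          simp [dotProduct, sq]
      _ ≤ ∑ i, (∑ j, (M i j)^2) * (w ⬝ᵥ w) := Finset.sum_le_sum fun i _ => hstep i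
      _ = trace (Mᵀ * M) * (w ⬝ᵥ w) := by
          rw [htr, ← Finset.sum_mul]
          rw [Finset.sum_comm]
  have hsq : (w ⬝ᵥ M.mulVec w)^2 ≤ trace (Mᵀ * M) * (w ⬝ᵥ w)^2 := by
    calc (w ⬝ᵥ M.mulVec w)^2 ≤ (w ⬝ᵥ w) * ((M.mulVec w) ⬝ᵥ (M.mulVec w)) := h1
      _ ≤ (w ⬝ᵥ w) * (trace (Mᵀ * M) * (w ⬝ᵥ w)) := by
          exact mul_le_mul_of_nonneg_left h2 hww
      _ = trace (Mᵀ * M) * (w ⬝ᵥ w)^2 := by ring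
  have := Real.sqrt_le_sqrt hsq
  rw [Real.sqrt_sq_eq_abs] at this
  calc |w ⬝ᵥ M.mulVec w| ≤ Real.sqrt (trace (Mᵀ * M) * (w ⬝ᵥ w)^2) := this
    _ = Real.sqrt (trace (Mᵀ * M)) * Real.sqrt ((w ⬝ᵥ w)^2) := Real.sqrt_mul' _ (sq_nonneg _)
    _ = Real.sqrt (trace (Mᵀ * M)) * (w ⬝ᵥ w) := by
        rw [Real.sqrt_sq_eq_abs, abs_of_nonneg hww]

lemma conjDot {n : ℕ} (S B : Matrix (Fin n) (Fin n) ℝ) (hST : Sᵀ = S) (v : Fin n → ℝ) :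
    (S *ᵥ v) ⬝ᵥ B *ᵥ (S *ᵥ v) = v ⬝ᵥ (S * B * S) *ᵥ v := by
  have h1 : v ᵥ* S = S *ᵥ v := by rw [← mulVec_transpose, hST]
  rw [← mulVec_mulVec, ← mulVec_mulVec, dotProduct_mulVec v, h1]

open scoped MatrixOrder in
lemma lemB {n : ℕ} {g A : Matrix (Fin n) (Fin n) ℝ} (hg : g.PosDef)
    (hA : A.IsSymm) (v : Fin n → ℝ) :
    |v ⬝ᵥ A.mulVec v| ≤ Real.sqrt (trace (g⁻¹ * A * (g⁻¹ * A))) * (v ⬝ᵥ g.mulVec v) := by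
  set S := CFC.sqrt g with hSdef
  have hS : S.PosSemidef := (CFC.sqrt_nonneg g).posSemidef
  have hST : Sᵀ = S := by
    have := hS.1
    rwa [Matrix.IsHermitian, conjTranspose_eq_transpose_of_trivial] at this
  have hSS : S * S = g := CFC.sqrt_mul_sqrt_self g hg.posSemidef.nonneg
  have hdetS : IsUnit S.det := by
    have h2 : S.det * S.det = g.det := by rw [← det_mul, hSS]
    have h3 : g.det ≠ 0 := ne_of_gt hg.det_pos
    refine isUnit_iff_ne_zero.2 fun h => h3 ?_
    rw [← h2, h]; ring
  have hSinv : S * S⁻¹ = 1 := mul_nonsing_inv S hdetS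
  have hinvS : S⁻¹ * S = 1 := nonsing_inv_mul S hdetS
  have hSTi : S⁻¹ᵀ = S⁻¹ := by rw [transpose_nonsing_inv, hST]
  set M := S⁻¹ * A * S⁻¹ with hMdef
  set w := S.mulVec v with hwdef
  have hMT : Mᵀ = M := by
    rw [hMdef, transpose_mul, transpose_mul, hSTi, hA.eq, Matrix.mul_assoc]
  have hSMS : S * M * S = A := by
    rw [hMdef]
    calc S * (S⁻¹ * A * S⁻¹) * S = (S * S⁻¹) * A * (S⁻¹ * S) := by
          simp only [Matrix.mul_assoc]
      _ = A := by rw [hSinv, hinvS, Matrix.one_mul, Matrix.mul_one]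
  have key1 : v ⬝ᵥ A.mulVec v = w ⬝ᵥ M.mulVec w := by
    rw [hwdef, conjDot S M hST v, hSMS]
  have key2 : w ⬝ᵥ w = v ⬝ᵥ g.mulVec v := by
    have := conjDot S 1 hST v
    simpa [hSS, Matrix.mul_one] using this
  have key3 : trace (Mᵀ * M) = trace (g⁻¹ * A * (g⁻¹ * A)) := by
    rw [hMT, hMdef, ← hSS, Matrix.mul_inv_rev]
    have hre : (S⁻¹*A*S⁻¹) * (S⁻¹*A*S⁻¹) = ((S⁻¹*A*S⁻¹)*(S⁻¹*A))*S⁻¹ := by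
      simp only [Matrix.mul_assoc]
    rw [hre, Matrix.trace_mul_comm]
    simp only [Matrix.mul_assoc]
  have := lemA M w
  rw [key1, ← key2, ← key3]
  exact this

/-- Let `g(s)`, `s ∈ I`, be a `C¹` curve of positive definite symmetric
`n×n` matrices with `g^{ij} ġ_{ij} = tr(g⁻¹ġ) = 0` and with bounded length
`∫_I (g^{ik}g^{jl} ġ_{ij} ġ_{kl})^{1/2} = ∫_I tr(g⁻¹ġ g⁻¹ġ)^{1/2} ≤ C` in the induced
Riemannian metric.  Then all the metrics `g(s)` are uniformly equivalent: there is
`Λ = Λ(C, g(s₀)) > 0` with `Λ⁻¹ g(s₀) ≤ g(s) ≤ Λ g(s₀)` as quadratic forms. -/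
theorem bounded_length_metrics_uniformly_equivalent
    (n : ℕ) (I : Set ℝ) (hI : I.OrdConnected) (hIm : MeasurableSet I)
    (g : ℝ → Matrix (Fin n) (Fin n) ℝ) (hg : ContDiff ℝ 1 g)
    (hpos : ∀ s ∈ I, (g s).PosDef) (hsym : ∀ s ∈ I, (g s).IsSymm)
    (htrfree : ∀ s ∈ I, Matrix.trace ((g s)⁻¹ * deriv g s) = 0)
    (hint : MeasureTheory.IntegrableOn
      (fun s => Real.sqrt (Matrix.trace ((g s)⁻¹ * deriv g s * ((g s)⁻¹ * deriv g s)))) I)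
    (C : ℝ)
    (hC : (∫ s in I,
      Real.sqrt (Matrix.trace ((g s)⁻¹ * deriv g s * ((g s)⁻¹ * deriv g s)))) ≤ C)
    (s₀ : ℝ) (hs₀ : s₀ ∈ I) :
    ∃ Λ : ℝ, 0 < Λ ∧ ∀ s ∈ I, ∀ v : Fin n → ℝ,
      Λ⁻¹ * (v ⬝ᵥ (g s₀).mulVec v) ≤ v ⬝ᵥ (g s).mulVec v ∧
      v ⬝ᵥ (g s).mulVec v ≤ Λ * (v ⬝ᵥ (g s₀).mulVec v) := by
  classical
  set h : ℝ → ℝ :=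
    fun s => Real.sqrt (Matrix.trace ((g s)⁻¹ * deriv g s * ((g s)⁻¹ * deriv g s))) with hhdef
  have hdiff : Differentiable ℝ g := hg.differentiable one_ne_zero
  -- derivative of g is symmetric on the interior of I
  have hderiv_symm : ∀ t ∈ interior I, (deriv g t).IsSymm := by
    intro t ht
    have heq : (fun u => (g u)ᵀ) =ᶠ[nhds t] g := by
      filter_upwards [isOpen_interior.mem_nhds ht] with u hu
      exact (hsym u (interior_subset hu)).eq
    have hTc : HasDerivAt (fun u => (g u)ᵀ) ((deriv g t)ᵀ) t := by
      let T := LinearMap.toContinuousLinearMap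
        (Matrix.transposeLinearEquiv (Fin n) (Fin n) ℝ ℝ).toLinearMap
      have h0 : HasDerivAt (fun u => T (g u)) (T (deriv g t)) t :=
        T.hasFDerivAt.comp_hasDerivAt t (hdiff t).hasDerivAt
      have hTeq : ∀ M : Matrix (Fin n) (Fin n) ℝ, T M = Mᵀ := fun M => rfl
      simpa [hTeq] using h0
    have h1 : deriv (fun u => (g u)ᵀ) t = deriv g t := heq.deriv_eq
    have h2 : deriv (fun u => (g u)ᵀ) t = (deriv g t)ᵀ := hTc.deriv
    show (deriv g t)ᵀ = deriv g t
    rw [← h2, h1]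
  refine ⟨Real.exp C, Real.exp_pos C, fun s hs v => ?_⟩
  by_cases hv : v = 0
  · subst hv; simp
  -- the quadratic form along the curve
  set Lv : Matrix (Fin n) (Fin n) ℝ →ₗ[ℝ] ℝ :=
    { toFun := fun M => v ⬝ᵥ M.mulVec v
      map_add' := fun M N => by simp [add_mulVec, dotProduct_add]
      map_smul' := fun c M => by simp [smul_mulVec, dotProduct_smul] } with hLv
  set Lc := LinearMap.toContinuousLinearMap Lv with hLc
  set f : ℝ → ℝ := fun t => v ⬝ᵥ (g t).mulVec v with hfdef
  have hfder : ∀ t, HasDerivAt f (v ⬝ᵥ (deriv g t).mulVec v) t := by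
    intro t
    exact Lc.hasFDerivAt.comp_hasDerivAt t (hdiff t).hasDerivAt
  have hfpos : ∀ t ∈ I, 0 < f t := by
    intro t ht
    have := (hpos t ht).dotProduct_mulVec_pos hv
    simpa [hfdef] using this
  have hfcont : Continuous f := Lc.continuous.comp hg.continuous
  have hf'cont : Continuous (fun t => v ⬝ᵥ (deriv g t).mulVec v) :=
    Lc.continuous.comp (hg.continuous_deriv le_rfl)
  -- pointwise bound on the interior
  have hbound : ∀ t ∈ interior I, |v ⬝ᵥ (deriv g t).mulVec v| ≤ h t * f t := by
    intro t ht
    exact lemB (hpos t (interior_subset ht)) (hderiv_symm t ht) v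
  -- FTC for log ∘ f on [s₀, s]
  have hIcc : Set.uIcc s₀ s ⊆ I := hI.uIcc_subset hs₀ hs
  have hIoc : Set.uIoc s₀ s ⊆ I := hI.uIoc_subset hs₀ hs
  set φ : ℝ → ℝ := fun t => (v ⬝ᵥ (deriv g t).mulVec v) / f t with hφdef
  have hφcont : ContinuousOn φ (Set.uIcc s₀ s) :=
    (hf'cont.continuousOn).div (hfcont.continuousOn)
      (fun t ht => ne_of_gt (hfpos t (hIcc ht)))
  have hφint : IntervalIntegrable φ MeasureTheory.volume s₀ s := hφcont.intervalIntegrable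
  have hFTC : ∫ t in s₀..s, φ t = Real.log (f s) - Real.log (f s₀) :=
    intervalIntegral.integral_eq_sub_of_hasDerivAt
      (fun t ht => (hfder t).log (ne_of_gt (hfpos t (hIcc ht)))) hφint
  -- bound the integral
  have habs : |Real.log (f s) - Real.log (f s₀)| ≤ C := by
    rw [← hFTC]
    have step1 : |∫ t in s₀..s, φ t| ≤ ∫ t in Set.uIoc s₀ s, |φ t| := by
      simpa using intervalIntegral.norm_integral_le_integral_norm_uIoc (f := φ)
        (a := s₀) (b := s) (μ := MeasureTheory.volume)
    have hφabs_int : IntegrableOn (fun t => |φ t|) (Set.uIoc s₀ s) :=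
      ((hφcont.norm.integrableOn_compact isCompact_uIcc).mono_set Set.Ioc_subset_Icc_self)
    have hh_int : IntegrableOn h (Set.uIoc s₀ s) := hint.mono_set hIoc
    have hae : ∀ᵐ t ∂(MeasureTheory.volume.restrict (Set.uIoc s₀ s)),
        |φ t| ≤ h t := by
      rw [MeasureTheory.ae_restrict_iff' measurableSet_uIoc]
      have h0 : ∀ᵐ t : ℝ, t ≠ max s₀ s := by
        refine (MeasureTheory.ae_iff).2 ?_
        simpa [not_not] using (measure_singleton (max s₀ s))
      filter_upwards [h0] with t htne htmem
      have htint : t ∈ interior I := by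
        have h1 : min s₀ s < t := htmem.1
        have h2 : t < max s₀ s := lt_of_le_of_ne htmem.2 htne
        have hminI : min s₀ s ∈ I := by rcases min_cases s₀ s with ⟨hm, _⟩ | ⟨hm, _⟩ <;>
          rw [hm] <;> assumption
        have hmaxI : max s₀ s ∈ I := by rcases max_cases s₀ s with ⟨hm, _⟩ | ⟨hm, _⟩ <;>
          rw [hm] <;> assumption
        have hsub : Set.Ioo (min s₀ s) (max s₀ s) ⊆ I :=
          Set.Ioo_subset_Icc_self.trans (hI.out hminI hmaxI)
        exact interior_maximal hsub isOpen_Ioo ⟨h1, h2⟩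
      have hfp := hfpos t (interior_subset htint)
      rw [hφdef]
      rw [abs_div, abs_of_pos hfp, div_le_iff₀ hfp]
      exact hbound t htint
    have step2 : ∫ t in Set.uIoc s₀ s, |φ t| ≤ ∫ t in Set.uIoc s₀ s, h t :=
      MeasureTheory.setIntegral_mono_ae_restrict hφabs_int hh_int hae
    have step3 : ∫ t in Set.uIoc s₀ s, h t ≤ ∫ t in I, h t := by
      refine MeasureTheory.setIntegral_mono_set hint ?_ (HasSubset.Subset.eventuallyLE hIoc)
      exact Filter.Eventually.of_forall fun t => Real.sqrt_nonneg _
    calc |∫ t in s₀..s, φ t| ≤ ∫ t in Set.uIoc s₀ s, |φ t| := step1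
      _ ≤ ∫ t in Set.uIoc s₀ s, h t := step2
      _ ≤ ∫ t in I, h t := step3
      _ ≤ C := hC
  have hfs := hfpos s hs
  have hfs₀ := hfpos s₀ hs₀
  constructor
  · have h1 : Real.log (f s₀) - C ≤ Real.log (f s) := by linarith [(abs_le.1 habs).1]
    calc (Real.exp C)⁻¹ * (v ⬝ᵥ (g s₀).mulVec v)
        = Real.exp (Real.log (f s₀) - C) := by
          rw [Real.exp_sub, Real.exp_log hfs₀]; ring
      _ ≤ Real.exp (Real.log (f s)) := Real.exp_le_exp.2 h1
      _ = v ⬝ᵥ (g s).mulVec v := Real.exp_log hfs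
  · have h1 : Real.log (f s) ≤ C + Real.log (f s₀) := by linarith [(abs_le.1 habs).2]
    calc v ⬝ᵥ (g s).mulVec v = Real.exp (Real.log (f s)) := (Real.exp_log hfs).symm
      _ ≤ Real.exp (C + Real.log (f s₀)) := Real.exp_le_exp.2 h1
      _ = Real.exp C * (v ⬝ᵥ (g s₀).mulVec v) := by
          rw [Real.exp_add, Real.exp_log hfs₀]
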